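/- For every k-uniform hypergraph S ⊆ binom([n],k) and every invertible n×n matrix g over a field, the partial shift Δ_g(S) has the same cardinality as S. -/

import Mathlib

open Finset
open scoped symmDiff

/-- The type of `k`-element subsets of `[n]`. -/
def KSet (n k : ℕ) := {s : Finset (Fin n) // s.card = k}

instance {n k : ℕ} : Fintype (KSet n k) := by unfold KSet; infer_instance
instance {n k : ℕ} : DecidableEq (KSet n k) := by unfold KSet; infer_instance

/-- Lexicographic strict order on finsets: `s <lex t` iff the minimum of the
symmetric difference `s ∆ t` belongs to `s`. -/
def lexLt {n : ℕ} (s t : Finset (Fin n)) : Prop :=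
  ∃ a, a ∈ s \ t ∧ ∀ b ∈ s ∆ t, a ≤ b

/-- The `k`-th compound matrix of `g`. -/
def compound {F : Type*} [Field F] {n : ℕ} (g : Matrix (Fin n) (Fin n) F) (k : ℕ) :
    Matrix (KSet n k) (KSet n k) F :=
  fun σ τ => (Matrix.of fun a b : Fin k =>
    g (σ.1.orderIsoOfFin σ.2 a) (τ.1.orderIsoOfFin τ.2 b)).det

/-- The column of the matrix `g^{∧S}` (rows of the `k`-th compound matrix of `g`
indexed by the hypergraph `S`) corresponding to the `k`-set `σ`. -/
def shiftCol {F : Type*} [Field F] {n k : ℕ} (g : Matrix (Fin n) (Fin n) F)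
    (S : Finset (KSet n k)) (σ : KSet n k) : {ρ // ρ ∈ S} → F :=
  fun ρ => compound g k ρ.1 σ

/-- The partial exterior shift `Δ_g(S)`: those `σ` whose column of `g^{∧S}` is
not in the span of the lexicographically earlier columns. -/
def Delta {F : Type*} [Field F] {n k : ℕ} (g : Matrix (Fin n) (Fin n) F)
    (S : Finset (KSet n k)) : Set (KSet n k) :=
  {σ | shiftCol g S σ ∉
    Submodule.span F (shiftCol g S '' {ρ : KSet n k | lexLt ρ.1 σ.1})}

/- ### Auxiliary lemmas -/

private lemma aux_sum_two_pow_lt (N : ℕ) : ∑ i ∈ Finset.range N, 2 ^ i < 2 ^ N := by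
  induction N with
  | zero => simp
  | succ N ih =>
    rw [Finset.sum_range_succ, pow_succ]
    omega

/-- Binary weight of a finset of `Fin n`, with smaller elements more significant. -/
private def lexWt {n : ℕ} (s : Finset (Fin n)) : ℕ := ∑ i ∈ s, 2 ^ (n - i.val)

private lemma lexWt_lt_of_lexLt {n : ℕ} {s t : Finset (Fin n)} (h : lexLt s t) :
    lexWt t < lexWt s := by
  obtain ⟨a, has, hmin⟩ := h
  have hs : a ∈ s := (Finset.mem_sdiff.1 has).1
  have hat : a ∉ t := (Finset.mem_sdiff.1 has).2
  have hdec : ∀ u v : Finset (Fin n), lexWt u = lexWt (u \ v) + lexWt (u ∩ v) := by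
    intro u v
    rw [lexWt, lexWt, lexWt, ← Finset.sdiff_inter_self_left u v,
      Finset.sum_sdiff Finset.inter_subset_left]
  have h1 : 2 ^ (n - a.val) ≤ lexWt (s \ t) :=
    Finset.single_le_sum (f := fun i : Fin n => 2 ^ (n - i.val)) (fun i _ => Nat.zero_le _) has
  have h2 : lexWt (t \ s) < 2 ^ (n - a.val) := by
    have hinj : ∀ x ∈ t \ s, ∀ y ∈ t \ s, n - x.val = n - y.val → x = y := by
      intro x _ y _ hxy
      have hx := x.isLt
      have hy := y.isLt
      exact Fin.ext (by omega)
    have him : Finset.image (fun i : Fin n => n - i.val) (t \ s) ⊆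
        Finset.range (n - a.val) := by
      intro j hj
      obtain ⟨i, hi, rfl⟩ := Finset.mem_image.1 hj
      have hi1 : i ∈ t := (Finset.mem_sdiff.1 hi).1
      have hia : a ≤ i := hmin i (Finset.mem_symmDiff.2 (Or.inr ⟨hi1, (Finset.mem_sdiff.1 hi).2⟩))
      have hiane : a ≠ i := fun hh => hat (hh ▸ hi1)
      have hlt : a.val < i.val := lt_of_le_of_ne hia (fun hh => hiane (Fin.ext hh))
      have := i.isLt
      have := a.isLt
      exact Finset.mem_range.2 (by omega)
    calc lexWt (t \ s) = ∑ j ∈ Finset.image (fun i : Fin n => n - i.val) (t \ s), 2 ^ j :=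
          (Finset.sum_image (f := fun j : ℕ => (2:ℕ) ^ j) (g := fun i : Fin n => n - i.val) hinj).symm
      _ ≤ ∑ j ∈ Finset.range (n - a.val), 2 ^ j :=
          Finset.sum_le_sum_of_subset him
      _ < 2 ^ (n - a.val) := aux_sum_two_pow_lt _
  have hst := hdec s t
  have hts := hdec t s
  rw [Finset.inter_comm] at hts
  omega

private lemma lexLt_total {n : ℕ} {s t : Finset (Fin n)} (h : s ≠ t) :
    lexLt s t ∨ lexLt t s := by
  have hne : (s ∆ t).Nonempty := by
    rw [Finset.nonempty_iff_ne_empty]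
    intro h0
    exact h (symmDiff_eq_bot.1 h0)
  set a := (s ∆ t).min' hne with hadef
  have ha : a ∈ s ∆ t := (s ∆ t).min'_mem hne
  have hmin : ∀ b ∈ s ∆ t, a ≤ b := fun b hb => (s ∆ t).min'_le b hb
  rcases Finset.mem_symmDiff.1 ha with ⟨h1, h2⟩ | ⟨h1, h2⟩
  · exact Or.inl ⟨a, Finset.mem_sdiff.2 ⟨h1, h2⟩, hmin⟩
  · exact Or.inr ⟨a, Finset.mem_sdiff.2 ⟨h1, h2⟩, fun b hb => hmin b (by rwa [symmDiff_comm])⟩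

/-- The partial shift preserves cardinality: `|Δ_g(S)| = |S|`. -/
theorem ncard_Delta {F : Type*} [Field F] {n k : ℕ}
    (g : Matrix (Fin n) (Fin n) F) (hg : IsUnit g.det) (S : Finset (KSet n k)) :
    (Delta g S).ncard = S.card := by
  classical
  -- the increasing enumeration of a `k`-set
  let emb : KSet n k → Fin k → Fin n := fun σ a => σ.1.orderIsoOfFin σ.2 a
  have hembinj : ∀ σ : KSet n k, Function.Injective (emb σ) := by
    intro σ a b hab
    exact (σ.1.orderIsoOfFin σ.2).injective (Subtype.ext hab)
  have hembmem : ∀ (σ : KSet n k) (a : Fin k), emb σ a ∈ σ.1 := fun σ a =>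
    (σ.1.orderIsoOfFin σ.2 a).2
  -- Step 1: the rows of the compound matrix are linearly independent.
  have hfull : LinearIndependent F (fun σ τ : KSet n k => compound g k σ τ) := by
    rw [Fintype.linearIndependent_iff]
    intro c hc σ₀
    have hc' : ∀ τ : KSet n k, ∑ σ : KSet n k, c σ * compound g k σ τ = 0 := by
      intro τ
      have := congrFun hc τ
      simpa using this
    -- the alternating map attached to a row
    let A : KSet n k → ((Fin n → F) [⋀^Fin k]→ₗ[F] F) := fun σ =>
      (Matrix.detRowAlternating).compLinearMap (g.submatrix (emb σ) id).mulVecLin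
    let Φ : (Fin n → F) [⋀^Fin k]→ₗ[F] F := ∑ σ : KSet n k, c σ • A σ
    have hΦapp : ∀ w : Fin k → (Fin n → F), Φ w = ∑ σ : KSet n k, c σ * A σ w := by
      intro w
      have hgen : ∀ s : Finset (KSet n k),
          ((∑ σ ∈ s, c σ • A σ : (Fin n → F) [⋀^Fin k]→ₗ[F] F) w) = ∑ σ ∈ s, c σ * A σ w := by
        intro s
        induction s using Finset.induction with
        | empty => simp
        | insert _ _ h ih =>
          rw [Finset.sum_insert h, Finset.sum_insert h, AlternatingMap.add_apply,
            AlternatingMap.smul_apply, ih, smul_eq_mul]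
      exact hgen Finset.univ
    have hAeval : ∀ σ τ : KSet n k,
        A σ (fun b => Pi.single (emb τ b) (1 : F)) = compound g k σ τ := by
      intro σ τ
      have h1 : A σ (fun b => Pi.single (emb τ b) (1 : F))
          = Matrix.det (Matrix.of fun b a : Fin k => g (emb σ a) (emb τ b)) := by
        simp only [A, AlternatingMap.compLinearMap_apply, Matrix.mulVecLin_apply,
          Matrix.mulVec_single_one]
        rfl
      rw [h1, ← Matrix.det_transpose]
      rfl
    have hΦzero : Φ = 0 := by
      apply Module.Basis.ext_alternating (Pi.basisFun F (Fin n))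
      intro v hv
      have hcard : (Finset.image v Finset.univ).card = k := by
        rw [Finset.card_image_of_injective _ hv, Finset.card_univ, Fintype.card_fin]
      set τ : KSet n k := ⟨Finset.image v Finset.univ, hcard⟩ with hτdef
      have hmemv : ∀ i, v i ∈ τ.1 := fun i => Finset.mem_image_of_mem v (Finset.mem_univ i)
      let π : Fin k → Fin k := fun i => (τ.1.orderIsoOfFin τ.2).symm ⟨v i, hmemv i⟩
      have hπinj : Function.Injective π := by
        intro i j hij
        apply hv
        have := congrArg (fun x => ((τ.1.orderIsoOfFin τ.2) x : Fin n)) hij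
        simpa [π] using this
      let πe : Equiv.Perm (Fin k) := Equiv.ofBijective π (Finite.injective_iff_bijective.1 hπinj)
      have hve : ∀ i, emb τ (πe i) = v i := by
        intro i
        have hπe : πe i = π i := rfl
        rw [hπe]
        show ((τ.1.orderIsoOfFin τ.2) ((τ.1.orderIsoOfFin τ.2).symm ⟨v i, hmemv i⟩) : Fin n) = v i
        rw [OrderIso.apply_symm_apply]
      have hΦτ : Φ (fun b => Pi.single (emb τ b) (1 : F)) = 0 := by
        have hΦs : Φ (fun b => Pi.single (emb τ b) (1 : F))
            = ∑ σ : KSet n k, c σ * compound g k σ τ := by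
          rw [hΦapp]
          exact Finset.sum_congr rfl fun σ _ => by rw [hAeval]
        rw [hΦs]
        exact hc' τ
      have hcomp : (fun i => (Pi.basisFun F (Fin n)) (v i))
          = (fun b => Pi.single (emb τ b) (1 : F)) ∘ πe := by
        funext i
        simp [Function.comp, hve i]
      rw [hcomp, Φ.map_perm, hΦτ]
      simp
    -- evaluate Φ at the `g⁻¹`-image of the basis vectors indexed by `σ₀`.
    have hginv : g * g⁻¹ = 1 := Matrix.mul_nonsing_inv g hg
    have heval2 : ∀ σ : KSet n k,
        A σ (fun b => Matrix.mulVec g⁻¹ (Pi.single (emb σ₀ b) (1 : F))) = if σ = σ₀ then 1 else 0 := by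
      intro σ
      have hsub : g.submatrix (emb σ) id * g⁻¹
          = (1 : Matrix (Fin n) (Fin n) F).submatrix (emb σ) id := by
        have := Matrix.submatrix_mul g g⁻¹ (emb σ) id id Function.bijective_id
        rw [← Matrix.submatrix_id_id g⁻¹]
        rw [← this, hginv]
      have hstep : ∀ b : Fin k, (g.submatrix (emb σ) id).mulVecLin
          (Matrix.mulVec g⁻¹ (Pi.single (emb σ₀ b) (1 : F)))
          = fun a => (1 : Matrix (Fin n) (Fin n) F) (emb σ a) (emb σ₀ b) := by
        intro b
        rw [Matrix.mulVecLin_apply, Matrix.mulVec_mulVec, hsub, Matrix.mulVec_single_one]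
        rfl
      have h1 : A σ (fun b => Matrix.mulVec g⁻¹ (Pi.single (emb σ₀ b) (1 : F)))
          = Matrix.det (Matrix.of fun b a : Fin k =>
              (1 : Matrix (Fin n) (Fin n) F) (emb σ a) (emb σ₀ b)) := by
        simp only [A, AlternatingMap.compLinearMap_apply]
        rw [show (fun b => (g.submatrix (emb σ) id).mulVecLin
            (Matrix.mulVec g⁻¹ (Pi.single (emb σ₀ b) (1 : F))))
            = fun (b : Fin k) (a : Fin k) => (1 : Matrix (Fin n) (Fin n) F) (emb σ a) (emb σ₀ b)
            from funext hstep]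
        rfl
      rw [h1]
      by_cases hσ : σ = σ₀
      · subst hσ
        rw [if_pos rfl]
        have : (Matrix.of fun b a : Fin k =>
            (1 : Matrix (Fin n) (Fin n) F) (emb σ a) (emb σ b)) = (1 : Matrix (Fin k) (Fin k) F) := by
          ext b a
          rw [Matrix.of_apply]
          by_cases hba : a = b
          · subst hba; simp
          · rw [Matrix.one_apply_ne (fun hh => hba (hembinj σ hh)),
              Matrix.one_apply_ne (fun hh => hba hh.symm)]
        rw [this, Matrix.det_one]
      · rw [if_neg hσ]
        have hne : ¬ σ.1 ⊆ σ₀.1 := by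
          intro hsub'
          exact hσ (Subtype.ext (Finset.eq_of_subset_of_card_le hsub' (by rw [σ.2, σ₀.2])))
        obtain ⟨x, hx, hx0⟩ := Finset.not_subset.1 hne
        apply Matrix.det_eq_zero_of_column_eq_zero ((σ.1.orderIsoOfFin σ.2).symm ⟨x, hx⟩)
        intro b
        have h2 : emb σ ((σ.1.orderIsoOfFin σ.2).symm ⟨x, hx⟩) = x := by
          show ((σ.1.orderIsoOfFin σ.2) ((σ.1.orderIsoOfFin σ.2).symm ⟨x, hx⟩) : Fin n) = x
          rw [OrderIso.apply_symm_apply]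
        have h3 : emb σ ((σ.1.orderIsoOfFin σ.2).symm ⟨x, hx⟩) ≠ emb σ₀ b := by
          rw [h2]
          intro hcontra
          exact hx0 (hcontra ▸ hembmem σ₀ b)
        exact Matrix.one_apply_ne h3
    have hΦval : Φ (fun b => Matrix.mulVec g⁻¹ (Pi.single (emb σ₀ b) (1 : F))) = c σ₀ := by
      rw [hΦapp]
      rw [Finset.sum_congr rfl fun σ _ => by rw [heval2 σ]]
      simp
    rw [hΦzero] at hΦval
    simpa using hΦval.symm
  -- Step 2: the columns of the `S`-row submatrix span everything.
  have hrows : LinearIndependent F (fun ρ : {ρ // ρ ∈ S} => fun τ : KSet n k => compound g k ρ.1 τ) :=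
    hfull.comp Subtype.val Subtype.val_injective
  have hspan : Submodule.span F (Set.range (shiftCol g S)) = ⊤ := by
    let M : Matrix {ρ // ρ ∈ S} (KSet n k) F := Matrix.of fun ρ τ => compound g k ρ.1 τ
    have h1 : M.rank = Fintype.card {ρ // ρ ∈ S} := LinearIndependent.rank_matrix hrows
    have h2 : M.rank = Module.finrank F (Submodule.span F (Set.range M.transpose)) :=
      M.rank_eq_finrank_span_cols
    have h3 : Set.range M.transpose = Set.range (shiftCol g S) := rfl
    apply Submodule.eq_top_of_finrank_eq
    rw [← h3, ← h2, h1, Module.finrank_fintype_fun_eq_card]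
  -- Step 3: greedy argument along the lex order.
  set f := shiftCol g S with hfdef
  let total : ℕ := ∑ i : Fin n, 2 ^ (n - i.val)
  have hwt_le : ∀ s : Finset (Fin n), lexWt s ≤ total := fun s =>
    Finset.sum_le_sum_of_subset (Finset.subset_univ s)
  have hwf : WellFounded (fun σ τ : KSet n k => lexLt σ.1 τ.1) := by
    apply Subrelation.wf (r := InvImage (· < ·) (fun σ : KSet n k => total - lexWt σ.1))
    · intro σ τ h
      have h1 := lexWt_lt_of_lexLt h
      have h2 := hwt_le σ.1
      show total - lexWt σ.1 < total - lexWt τ.1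
      omega
    · exact InvImage.wf _ Nat.lt_wfRel.wf
  have hmem : ∀ σ : KSet n k, f σ ∈ Submodule.span F (f '' Delta g S) := by
    intro σ
    refine hwf.induction (C := fun σ => f σ ∈ Submodule.span F (f '' Delta g S)) σ ?_
    intro τ ih
    by_cases hτ : τ ∈ Delta g S
    · exact Submodule.subset_span ⟨τ, hτ, rfl⟩
    · have hτ' : f τ ∈ Submodule.span F (f '' {ρ : KSet n k | lexLt ρ.1 τ.1}) := not_not.1 hτ
      refine Submodule.span_le.2 ?_ hτ'
      rintro _ ⟨ρ, hρ, rfl⟩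
      exact ih ρ hρ
  have hspan2 : ⊤ ≤ Submodule.span F (f '' Delta g S) := by
    rw [← hspan]
    refine Submodule.span_le.2 ?_
    rintro _ ⟨σ, rfl⟩
    exact hmem σ
  haveI : Fintype (Delta g S) := Fintype.ofFinite _
  have hindep : LinearIndependent F (fun σ : (Delta g S) => f σ.1) := by
    rw [Fintype.linearIndependent_iff]
    intro c hc
    by_contra hne
    push_neg at hne
    obtain ⟨ibad, hbad⟩ := hne
    have hnonempty : ({i : (Delta g S) | c i ≠ 0} : Finset _).Nonempty :=
      ⟨ibad, by simp [hbad]⟩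
    obtain ⟨i₀, hi₀mem, hi₀min⟩ :=
      Finset.exists_min_image _ (fun i : (Delta g S) => lexWt i.1.1) hnonempty
    have hc0 : c i₀ ≠ 0 := (Finset.mem_filter.1 hi₀mem).2
    have hlt : ∀ j : (Delta g S), c j ≠ 0 → j ≠ i₀ → lexLt j.1.1 i₀.1.1 := by
      intro j hj hjne
      have hjj' : j.1.1 ≠ i₀.1.1 := by
        intro hh
        exact hjne (Subtype.ext (Subtype.ext hh))
      rcases lexLt_total hjj' with h | h
      · exact h
      · have hmin := hi₀min j (Finset.mem_filter.2 ⟨Finset.mem_univ _, hj⟩)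
        exact absurd hmin (not_le.2 (lexWt_lt_of_lexLt h))
    have hmem' : f i₀.1 ∈ Submodule.span F (f '' {ρ : KSet n k | lexLt ρ.1 i₀.1.1}) := by
      have hsum : c i₀ • f i₀.1 = - ∑ j ∈ Finset.univ.erase i₀, c j • f j.1 := by
        have h0 := hc
        rw [← Finset.add_sum_erase _ (fun j : (Delta g S) => c j • f j.1)
          (Finset.mem_univ i₀)] at h0
        exact eq_neg_of_add_eq_zero_left h0
      have hrw : f i₀.1 = (c i₀)⁻¹ • (c i₀ • f i₀.1) := by
        rw [smul_smul, inv_mul_cancel₀ hc0, one_smul]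
      rw [hrw, hsum]
      apply Submodule.smul_mem
      apply Submodule.neg_mem
      apply Submodule.sum_mem
      intro j hj
      by_cases hcj : c j = 0
      · simp [hcj]
      · exact Submodule.smul_mem _ _
          (Submodule.subset_span ⟨j.1, hlt j hcj (Finset.ne_of_mem_erase hj), rfl⟩)
    exact i₀.2 hmem'
  let b : Module.Basis (Delta g S) F ({ρ // ρ ∈ S} → F) :=
    Module.Basis.mk hindep (by rw [← Set.image_eq_range]; exact hspan2)
  calc (Delta g S).ncard = Nat.card (Delta g S) := (Nat.card_coe_set_eq _).symm
    _ = Fintype.card (Delta g S) := Nat.card_eq_fintype_card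
    _ = Module.finrank F ({ρ // ρ ∈ S} → F) := (Module.finrank_eq_card_basis b).symm
    _ = Fintype.card {ρ // ρ ∈ S} := Module.finrank_fintype_fun_eq_card F
    _ = S.card := Fintype.card_coe S
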